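/- Let G be a finite simple graph, v ∈ V(G), and let c be a proper coloring of G − v together with an orientation h of G − v satisfying, for every vertex x of G − v, |N⁻(x)| = |C⁻(x)| and C⁻(x) ∩ C⁺(x) = ∅. Suppose the neighbors of v in G receive pairwise distinct colors under c, and v is colored with a color different from the colors of all its neighbors and different from every color in C⁻(x) for each neighbor x of v. Then, orienting all edges incident with v towards v, the extended orientation of G again satisfies |N⁻(x)| = |C⁻(x)| and C⁻(x) ∩ C⁺(x) = ∅ for every vertex x of G; in particular, the extended coloring is a star coloring of G. -/

import Mathlib

/-- A proper coloring: adjacent vertices receive different colors. -/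
def IsProperColoring {V : Type*} (G : SimpleGraph V) (f : V → ℕ) : Prop :=
  ∀ ⦃x y⦄, G.Adj x y → f x ≠ f y

/-- A star coloring: a proper coloring with no two-colored path on four vertices. -/
def IsStarColoring {V : Type*} (G : SimpleGraph V) (f : V → ℕ) : Prop :=
  IsProperColoring G f ∧
  ∀ a b c d : V, G.Adj a b → G.Adj b c → G.Adj c d →
    a ≠ c → a ≠ d → b ≠ d → ¬ (f a = f c ∧ f b = f d)

/-- Extension step of Theorem 8: suppose `c` is a proper coloring of `G - v` and `D` is an
orientation of `G - v` (`D u w` means the edge `uw` has head `w`) such that every vertex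
`x` of `G - v` has its in-neighbors colored by pairwise distinct colors
(`|N⁻(x)| = |C⁻(x)|`) and `C⁻(x) ∩ C⁺(x) = ∅`.  If the neighbors of `v` in `G` receive
pairwise distinct colors, and the color of `v` differs from the colors of all its
neighbors and from every color in `C⁻(x)` for each neighbor `x` of `v`, then orienting
all edges incident with `v` towards `v` yields an orientation of `G` satisfying
`|N⁻(x)| = |C⁻(x)|` and `C⁻(x) ∩ C⁺(x) = ∅` for every vertex `x` of `G`; in particular
`c` is a star coloring of `G`. -/
theorem stmt14 {V : Type*} [Fintype V] (G : SimpleGraph V) (v : V) (c : V → ℕ)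
    (D : V → V → Prop)
    (hproper : ∀ x y : V, G.Adj x y → x ≠ v → y ≠ v → c x ≠ c y)
    (hD : ∀ u w : V, D u w → G.Adj u w ∧ u ≠ v ∧ w ≠ v)
    (hOri : ∀ u w : V, G.Adj u w → u ≠ v → w ≠ v → (D u w ↔ ¬ D w u))
    (hIn : ∀ x u w : V, D u x → D w x → c u = c w → u = w)
    (hInOut : ∀ x u w : V, D u x → D x w → c u ≠ c w)
    (hnbr : ∀ u w : V, G.Adj v u → G.Adj v w → u ≠ w → c u ≠ c w)
    (hcv : ∀ u : V, G.Adj v u → c v ≠ c u)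
    (hcvIn : ∀ x u : V, G.Adj v x → D u x → c v ≠ c u) :
    (∀ u w : V, (fun a b => D a b ∨ (G.Adj a v ∧ b = v)) u w → G.Adj u w) ∧
    (∀ u w : V, G.Adj u w →
      ((fun a b => D a b ∨ (G.Adj a v ∧ b = v)) u w ↔
        ¬ (fun a b => D a b ∨ (G.Adj a v ∧ b = v)) w u)) ∧
    (∀ x u w : V, (fun a b => D a b ∨ (G.Adj a v ∧ b = v)) u x →
      (fun a b => D a b ∨ (G.Adj a v ∧ b = v)) w x → c u = c w → u = w) ∧
    (∀ x u w : V, (fun a b => D a b ∨ (G.Adj a v ∧ b = v)) u x →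
      (fun a b => D a b ∨ (G.Adj a v ∧ b = v)) x w → c u ≠ c w) ∧
    IsStarColoring G c := by
  set D' : V → V → Prop := fun a b => D a b ∨ (G.Adj a v ∧ b = v) with hD'def
  have adj' : ∀ u w, D' u w → G.Adj u w := by
    rintro u w (h | ⟨h, rfl⟩)
    · exact (hD u w h).1
    · exact h
  have ori' : ∀ u w, G.Adj u w → (D' u w ↔ ¬ D' w u) := by
    intro u w huw
    by_cases hu : u = v
    · subst hu
      constructor
      · rintro (h | ⟨h, _⟩)
        · exact absurd rfl (hD _ _ h).2.1
        · exact absurd h (G.loopless.irrefl _)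
      · intro h; exact absurd (Or.inr ⟨huw.symm, rfl⟩) h
    · by_cases hw : w = v
      · subst hw
        constructor
        · rintro _ (h2 | ⟨h2, _⟩)
          · exact (hD _ _ h2).2.1 rfl
          · exact absurd h2 (G.loopless.irrefl _)
        · intro _; exact Or.inr ⟨huw, rfl⟩
      · constructor
        · rintro (h | ⟨_, h2⟩) (h3 | ⟨h3, h4⟩)
          · exact ((hOri u w huw hu hw).1 h) h3
          · exact hu h4
          · exact hw h2
          · exact hw h2
        · intro h
          left
          exact (hOri u w huw hu hw).2 (fun hwu => h (Or.inl hwu))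
  have in' : ∀ x u w, D' u x → D' w x → c u = c w → u = w := by
    rintro x u w (h1 | ⟨h1, rfl⟩) (h2 | ⟨h2, h3⟩) hc
    · exact hIn x u w h1 h2 hc
    · exact absurd h3 (hD _ _ h1).2.2
    · exact absurd rfl (hD _ _ h2).2.2
    · by_contra hne
      exact hnbr u w h1.symm h2.symm hne hc
  have inout' : ∀ x u w, D' u x → D' x w → c u ≠ c w := by
    rintro x u w (h1 | ⟨h1, rfl⟩) (h2 | ⟨h2, rfl⟩)
    · exact hInOut x u w h1 h2
    · exact fun hc => hcvIn x u h2.symm h1 hc.symm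
    · exact absurd rfl (hD _ _ h2).2.1
    · exact absurd h2 (G.loopless.irrefl _)
  have prop : IsProperColoring G c := by
    intro x y hxy
    by_cases hx : x = v
    · subst hx; exact hcv y hxy
    · by_cases hy : y = v
      · subst hy; exact fun h => hcv x hxy.symm h.symm
      · exact hproper x y hxy hx hy
  refine ⟨adj', ori', in', inout', prop, ?_⟩
  rintro a b x d hab hbx hxd hax had hbd ⟨hac, hbd'⟩
  by_cases h : D' b x
  · by_cases h2 : D' x d
    · exact inout' x b d h h2 hbd'
    · have hdx : D' d x := by
        by_contra hn; exact h2 ((ori' x d hxd).2 hn)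
      exact hbd (in' x b d h hdx hbd')
  · have hxb : D' x b := by
      by_contra hn; exact h ((ori' b x hbx).2 hn)
    by_cases h2 : D' a b
    · exact hax (in' b a x h2 hxb hac)
    · have hba : D' b a := by
        by_contra hn; exact h2 ((ori' a b hab).2 hn)
      exact inout' b x a hxb hba hac.symm
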